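/- Let z be the Euclidean nearest point to y in a closed convex set P ⊆ ℝⁿ, and let x ∈ P satisfy ⟪y−z, x−z⟫ = 0 with y ≠ x and z ≠ x. Then the vector v = (cos(∠yxz)/‖x−z‖)·(x−z), where cos(∠yxz) = ‖x−z‖/‖x−y‖, satisfies ⟪v, w−x⟫ ≤ ‖w−y‖ − ‖x−y‖ for all w ∈ P; i.e., v is a subgradient at x of the restriction to P of the distance function to y. -/

import Mathlib

open scoped RealInnerProductSpace
set_option maxHeartbeats 1000000

theorem stmt_3 {n : ℕ} (P : Set (EuclideanSpace ℝ (Fin n))) (hP : P.Nonempty)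
    (hPc : IsClosed P) (hPconv : Convex ℝ P)
    (y z x : EuclideanSpace ℝ (Fin n)) (hyP : y ∉ P)
    (hzP : z ∈ P) (hproj : ∀ p ∈ P, dist y z ≤ dist y p)
    (hxP : x ∈ P) (hperp : ⟪y - z, x - z⟫ = 0) (hyx : y ≠ x) (hzx : z ≠ x) :
    ∀ w ∈ P, ⟪((‖x - z‖ / ‖x - y‖) / ‖x - z‖) • (x - z), w - x⟫ ≤ ‖w - y‖ - ‖x - y‖ := by
  intro w hw
  have hxy0 : (0:ℝ) < ‖x - y‖ := by
    rw [norm_pos_iff, sub_ne_zero]; exact fun h => hyx h.symm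
  have hxz0 : (0:ℝ) < ‖x - z‖ := by
    rw [norm_pos_iff, sub_ne_zero]; exact fun h => hzx h.symm
  haveI : Nonempty ↑P := hP.to_subtype
  have key : ∀ p ∈ P, ⟪y - z, p - z⟫ ≤ 0 := by
    rw [← norm_eq_iInf_iff_real_inner_le_zero hPconv hzP]
    have hb : BddBelow (Set.range fun p : P => ‖y - (p : EuclideanSpace ℝ (Fin n))‖) :=
      ⟨0, by rintro b ⟨p, rfl⟩; exact norm_nonneg _⟩
    apply le_antisymm
    · exact le_ciInf fun p => by simpa [dist_eq_norm] using hproj p.1 p.2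
    · exact ciInf_le hb ⟨z, hzP⟩
  have h1 : ⟪y - z, w - x⟫ ≤ 0 := by
    have e : ⟪y - z, w - x⟫ = ⟪y - z, w - z⟫ - ⟪y - z, x - z⟫ := by
      rw [← inner_sub_right]; congr 1; abel
    rw [e, hperp]
    have := key w hw
    linarith
  have h2 : ⟪x - y, w - x⟫ ≤ ‖x - y‖ * ‖w - y‖ - ‖x - y‖ ^ 2 := by
    have e : ⟪x - y, w - x⟫ = ⟪x - y, w - y⟫ - ⟪x - y, x - y⟫ := by
      rw [← inner_sub_right]; congr 1; abel
    have cs := real_inner_le_norm (x - y) (w - y)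
    rw [e, real_inner_self_eq_norm_sq]
    nlinarith
  have h3 : ⟪x - z, w - x⟫ ≤ ‖x - y‖ * (‖w - y‖ - ‖x - y‖) := by
    have e : ⟪x - z, w - x⟫ = ⟪x - y, w - x⟫ + ⟪y - z, w - x⟫ := by
      rw [← inner_add_left]; congr 1; abel
    nlinarith
  rw [real_inner_smul_left]
  have hc : (‖x - z‖ / ‖x - y‖) / ‖x - z‖ = 1 / ‖x - y‖ := by
    field_simp
  rw [hc]
  calc (1 / ‖x - y‖) * ⟪x - z, w - x⟫
      ≤ (1 / ‖x - y‖) * (‖x - y‖ * (‖w - y‖ - ‖x - y‖)) := by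
        apply mul_le_mul_of_nonneg_left h3 (by positivity)
    _ = ‖w - y‖ - ‖x - y‖ := by field_simp
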